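/- If the price function p is generic, meaning there is a unique shortest path (with respect to w_p) from r to every vertex, then p is not optimal unless no shortest path from r uses a priceable edge: there exists a price function p' with ρ(p') > ρ(p) whenever some vertex v with φ(v) > 0 has its unique shortest path from r using at least one priceable edge. (Equivalently, any optimal price function with positive revenue is degenerate.) -/
import Mathlib


/-- A directed graph: a type of edges with source and target maps. -/
structure Dgraph (V : Type) (E : Type) where
  src : E → V
  tgt : E → V

/-- `IsWalk G u v π`: the list of edges `π` forms a walk from `u` to `v` in `G`. -/
def IsWalk {V E : Type} (G : Dgraph V E) : V → V → List E → Prop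
  | u, v, [] => u = v
  | u, v, e :: es => G.src e = u ∧ IsWalk G (G.tgt e) v es

/-- A path is a walk without repeated edges. -/
def IsPath {V E : Type} (G : Dgraph V E) (u v : V) (π : List E) : Prop :=
  IsWalk G u v π ∧ π.Nodup

/-- Total weight of a list of edges under the weight function `w`. -/
def wval {E : Type} (w : E → ℝ) (π : List E) : ℝ := (π.map w).sum

/-- Total price of the priceable edges (those in `EP`) along `π`. -/
def pval {E : Type} [DecidableEq E] (p : E → ℝ) (EP : Finset E) (π : List E) : ℝ :=
  ((π.filter (· ∈ EP)).map p).sum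

/-- `χ(π) = Σ_{e_i ∈ π ∩ E_P} 2^{idx e_i}`. -/
def chival {E : Type} [DecidableEq E] (EP : Finset E) (idx : E → ℕ) (π : List E) : ℝ :=
  ((π.filter (· ∈ EP)).map (fun e => (2 : ℝ) ^ idx e)).sum

/-- The weight function `w_p`: price `p e` on priceable edges, fixed cost `c e` otherwise. -/
def wp {E : Type} [DecidableEq E] (c p : E → ℝ) (EP : Finset E) (e : E) : ℝ :=
  if e ∈ EP then p e else c e

/-- Strict lexicographic order on `ℝ × ℝ × ℝ`. -/
def lexLt (a b : ℝ × ℝ × ℝ) : Prop :=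
  a.1 < b.1 ∨ (a.1 = b.1 ∧ (a.2.1 < b.2.1 ∨ (a.2.1 = b.2.1 ∧ a.2.2 < b.2.2)))

/-- Non-strict lexicographic order on `ℝ × ℝ × ℝ`. -/
def lexLe (a b : ℝ × ℝ × ℝ) : Prop := lexLt a b ∨ a = b

/-- The composite weight `ŵ_p(π) = (w_p(π), -p(π), -χ(π))`. -/
def hatw {E : Type} [DecidableEq E] (c p : E → ℝ) (EP : Finset E) (idx : E → ℕ)
    (π : List E) : ℝ × ℝ × ℝ :=
  (wval (wp c p EP) π, -(pval p EP π), -(chival EP idx π))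

/-- `T` is a `ŵ_p`-shortest path tree from `r`: for every vertex `v`, `T v` is a path from
`r` to `v` that is lexicographically minimal with respect to `ŵ_p` among all such paths. -/
def IsHatSPT {V E : Type} [DecidableEq E] (G : Dgraph V E) (r : V)
    (c p : E → ℝ) (EP : Finset E) (idx : E → ℕ) (T : V → List E) : Prop :=
  ∀ v, IsPath G r v (T v) ∧
    ∀ π, IsPath G r v π → lexLe (hatw c p EP idx (T v)) (hatw c p EP idx π)

/-- `T` is a shortest path tree from `r` with respect to `w_p`. -/
def IsSPT {V E : Type} [DecidableEq E] (G : Dgraph V E) (r : V)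
    (c p : E → ℝ) (EP : Finset E) (T : V → List E) : Prop :=
  ∀ v, IsPath G r v (T v) ∧
    ∀ π, IsPath G r v π → wval (wp c p EP) (T v) ≤ wval (wp c p EP) π

/-- The last priceable edge along `π` (if any). -/
def lastP {E : Type} [DecidableEq E] (EP : Finset E) (π : List E) : Option E :=
  (π.filter (· ∈ EP)).getLast?

lemma sum_map_add_const {E : Type} (p : E → ℝ) (ε : ℝ) (l : List E) :
    (l.map (fun e => p e + ε)).sum = (l.map p).sum + ε * l.length := by
  induction l with
  | nil => simp
  | cons e es ih => simp [ih]; push_cast; ring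

lemma wval_cons {E : Type} (w : E → ℝ) (e : E) (es : List E) :
    wval w (e :: es) = w e + wval w es := by simp [wval]

lemma wval_shift {E : Type} [DecidableEq E] (c p : E → ℝ) (EP : Finset E) (ε : ℝ)
    (π : List E) :
    wval (wp c (fun e => p e + ε) EP) π
      = wval (wp c p EP) π + ε * (π.filter (· ∈ EP)).length := by
  induction π with
  | nil => simp [wval]
  | cons e es ih =>
    rw [wval_cons, wval_cons, ih]
    by_cases h : e ∈ EP
    · simp [wp, h, List.filter_cons]
      push_cast; ring
    · simp [wp, h, List.filter_cons]
      ring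

lemma pval_shift {E : Type} [DecidableEq E] (p : E → ℝ) (EP : Finset E) (ε : ℝ)
    (π : List E) :
    pval (fun e => p e + ε) EP π
      = pval p EP π + ε * (π.filter (· ∈ EP)).length := by
  unfold pval
  exact sum_map_add_const p ε _

lemma path_nodup {V E : Type} {G : Dgraph V E} {u v : V} {π : List E}
    (h : IsPath G u v π) : π.Nodup := h.2

/-- A generic price function (unique `w_p`-shortest path from `r` to every vertex) is not
optimal when some vertex of positive demand uses a priceable edge on its (unique) shortest
path: there is a positive price function `p'` with `ρ(p') > ρ(p)`.  Here `ρ(p') > ρ(p)` is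
expressed by exhibiting a shortest path tree for `p'` whose revenue exceeds the revenue of
every shortest path tree for `p`. -/
theorem stmt_14 {V E : Type} [Fintype V] [Fintype E] [DecidableEq E]
    (G : Dgraph V E) (r : V) (EP : Finset E) (c p : E → ℝ)
    (φ : V → ℝ) (hφ : ∀ v, 0 ≤ φ v)
    (hc : ∀ e ∉ EP, 0 < c e) (hp : ∀ e ∈ EP, 0 < p e)
    (hgen : ∀ v : V, ∃ π, IsPath G r v π ∧
      (∀ π', IsPath G r v π' → wval (wp c p EP) π ≤ wval (wp c p EP) π') ∧
      (∀ π', IsPath G r v π' →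
        wval (wp c p EP) π' = wval (wp c p EP) π → π' = π))
    (hv : ∃ v : V, 0 < φ v ∧ ∀ π, IsPath G r v π →
      (∀ π', IsPath G r v π' → wval (wp c p EP) π ≤ wval (wp c p EP) π') →
      ∃ e ∈ π, e ∈ EP) :
    ∃ p' : E → ℝ, (∀ e ∈ EP, 0 < p' e) ∧
      ∃ T' : V → List E, IsSPT G r c p' EP T' ∧
        ∀ T : V → List E, IsSPT G r c p EP T →
          (∑ v, φ v * pval p EP (T v)) < ∑ v, φ v * pval p' EP (T' v) := by
  classical
  choose P0 hpath hmin huniq using hgen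
  obtain ⟨v₀, hv₀pos, hv₀⟩ := hv
  set w := wp c p EP with hw
  -- the finite set of positive gaps
  let F : Finset ℝ := Finset.univ.biUnion (fun v : V =>
    (Finset.univ.filter (fun l : {l : List E // l.Nodup} =>
      IsPath G r v l.val ∧ l.val ≠ P0 v)).image
      (fun l => wval w l.val - wval w (P0 v)))
  have hFpos : ∀ x ∈ F, 0 < x := by
    intro x hx
    simp only [F, Finset.mem_biUnion, Finset.mem_image, Finset.mem_filter,
      Finset.mem_univ, true_and] at hx
    obtain ⟨v, l, ⟨hl, hlne⟩, rfl⟩ := hx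
    have h1 := hmin v l.val hl
    rcases lt_or_eq_of_le h1 with h | h
    · linarith
    · exact absurd (huniq v l.val hl h.symm) hlne
  set δ : ℝ := if h : F.Nonempty then F.min' h else 1 with hδdef
  have hδpos : 0 < δ := by
    rw [hδdef]
    split_ifs with h
    · exact hFpos _ (F.min'_mem h)
    · norm_num
  have hδle : ∀ v (π' : List E), IsPath G r v π' → π' ≠ P0 v →
      wval w (P0 v) + δ ≤ wval w π' := by
    intro v π' hπ' hne
    have hmem : (wval w π' - wval w (P0 v)) ∈ F := by
      simp only [F, Finset.mem_biUnion, Finset.mem_image, Finset.mem_filter,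
        Finset.mem_univ, true_and]
      exact ⟨v, ⟨π', hπ'.2⟩, ⟨hπ', hne⟩, rfl⟩
    have hFne : F.Nonempty := ⟨_, hmem⟩
    have : δ ≤ wval w π' - wval w (P0 v) := by
      rw [hδdef]; rw [dif_pos hFne]; exact F.min'_le _ hmem
    linarith
  set N : ℝ := (Fintype.card E : ℝ) with hN
  have hN0 : 0 ≤ N := by positivity
  set ε : ℝ := δ / (N + 1) with hε
  have hεpos : 0 < ε := by positivity
  have hεN : ε * N < δ := by
    rw [hε, div_mul_eq_mul_div, div_lt_iff₀ (by linarith)]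
    nlinarith
  have hk : ∀ π : List E, π.Nodup →
      ((π.filter (· ∈ EP)).length : ℝ) ≤ N := by
    intro π hnd
    have h1 : (π.filter (· ∈ EP)).length ≤ π.length := List.length_filter_le _ _
    have h2 : π.length ≤ Fintype.card E := hnd.length_le_card
    rw [hN]
    exact_mod_cast h1.trans h2
  refine ⟨fun e => p e + ε, fun e he => by have := hp e he; show (0:ℝ) < p e + ε; linarith, P0, ?_, ?_⟩
  · -- P0 is an SPT for p'
    intro v
    refine ⟨hpath v, fun π' hπ' => ?_⟩
    rw [wval_shift, wval_shift, ← hw]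
    by_cases hne : π' = P0 v
    · rw [hne]
    · have h1 := hδle v π' hπ' hne
      have h2 : ε * ((P0 v).filter (· ∈ EP)).length ≤ ε * N :=
        mul_le_mul_of_nonneg_left (hk _ (hpath v).2) hεpos.le
      have h3 : (0:ℝ) ≤ ε * ((π'.filter (· ∈ EP)).length : ℝ) := by positivity
      linarith
  · intro T hT
    have hTeq : ∀ v, T v = P0 v := by
      intro v
      refine huniq v (T v) (hT v).1 ?_
      exact le_antisymm ((hT v).2 _ (hpath v)) (hmin v _ (hT v).1)
    have hsum_eq : (∑ v, φ v * pval p EP (T v)) = ∑ v, φ v * pval p EP (P0 v) := by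
      apply Finset.sum_congr rfl
      intro v _
      rw [hTeq v]
    rw [hsum_eq]
    apply Finset.sum_lt_sum
    · intro i _
      rw [pval_shift]
      have h3 : (0:ℝ) ≤ ε * (((P0 i).filter (· ∈ EP)).length : ℝ) := by positivity
      have := hφ i
      nlinarith
    · refine ⟨v₀, Finset.mem_univ _, ?_⟩
      rw [pval_shift]
      obtain ⟨e, he1, he2⟩ := hv₀ (P0 v₀) (hpath v₀) (hmin v₀)
      have hfil : e ∈ (P0 v₀).filter (· ∈ EP) := by
        simp [List.mem_filter, he1, he2]
      have hlen : 1 ≤ (((P0 v₀).filter (· ∈ EP)).length : ℝ) := by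
        have := List.length_pos_iff.mpr (List.ne_nil_of_mem hfil)
        exact_mod_cast this
      have hlp : (0:ℝ) < (((P0 v₀).filter (· ∈ EP)).length : ℝ) :=
        lt_of_lt_of_le one_pos hlen
      nlinarith [mul_pos hv₀pos (mul_pos hεpos hlp)]
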